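/- Let k ≥ 1, let p < q be odd primes with n = 2^k·p·q abundant, M = 2^{k+1} - 1, a = σ(n) - 2n. If n is weird, then pq ≠ r + s·p + t·q for all positive integers r, s, t with r, s, t ≤ M. -/

import Mathlib

/-- Sum of the positive divisors of `n`. -/
def sigma' (n : ℕ) : ℕ := ∑ d ∈ n.divisors, d

/-- `n` is abundant if `σ(n) > 2n`. -/
def Abundant (n : ℕ) : Prop := 2 * n < sigma' n

/-- `n` is pseudoperfect (in the weak sense) if some subset of its proper divisors sums to `n`. -/
def Pseudoperfect (n : ℕ) : Prop := ∃ s ⊆ n.properDivisors, ∑ d ∈ s, d = n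

/-- `n` is weird if it is abundant and no subset of its proper divisors sums to `n`. -/
def Weird (n : ℕ) : Prop := Abundant n ∧ ¬ Pseudoperfect n

theorem bin_rep : ∀ n m : ℕ, m < 2 ^ n → ∃ E ⊆ Finset.range n, ∑ j ∈ E, 2 ^ j = m := by
  intro n
  induction n with
  | zero => intro m hm; exact ⟨∅, by simp, by simpa using (Nat.lt_one_iff.mp hm).symm⟩
  | succ n ih =>
    intro m hm
    by_cases h : m < 2 ^ n
    · obtain ⟨E, hE, hs⟩ := ih m h
      exact ⟨E, hE.trans (Finset.range_subset_range.mpr (Nat.le_succ n)), hs⟩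
    · have h2 : (2:ℕ) ^ (n+1) = 2 ^ n * 2 := pow_succ 2 n
      obtain ⟨E, hE, hs⟩ := ih (m - 2 ^ n) (by omega)
      have hnE : n ∉ E := fun hn => by simpa using hE hn
      refine ⟨insert n E, ?_, ?_⟩
      · intro x hx
        rcases Finset.mem_insert.mp hx with rfl | hx
        · exact Finset.self_mem_range_succ x
        · exact (Finset.range_subset_range.mpr (Nat.le_succ n)) (hE hx)
      · rw [Finset.sum_insert hnE, hs]; omega

theorem geom_two (k : ℕ) : ∑ j ∈ Finset.range (k+1), 2 ^ j = 2 ^ (k+1) - 1 := by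
  induction k with
  | zero => simp
  | succ k ih =>
    rw [Finset.sum_range_succ, ih]
    have h1 := Nat.one_le_two_pow (n := k+1)
    have h2 : (2:ℕ) ^ (k+2) = 2 ^ (k+1) * 2 := pow_succ 2 (k+1)
    omega

set_option maxHeartbeats 1000000 in
theorem weird_no_representation (k p q : ℕ) (hk : 1 ≤ k) (hp : p.Prime) (hq : q.Prime)
    (hop : Odd p) (hoq : Odd q) (hpq : p < q) (hab : Abundant (2 ^ k * p * q))
    (hw : Weird (2 ^ k * p * q)) :
    ∀ r s t : ℕ, 0 < r → r ≤ 2 ^ (k + 1) - 1 → 0 < s → s ≤ 2 ^ (k + 1) - 1 →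
      0 < t → t ≤ 2 ^ (k + 1) - 1 → p * q ≠ r + s * p + t * q := by
  intro r s t hr hrM hs hsM ht htM hrep
  set M : ℕ := 2 ^ (k + 1) - 1 with hM
  set N : ℕ := 2 ^ k * p * q with hN
  have h2 : (2:ℕ) ^ (k+1) = 2 ^ k * 2 := pow_succ 2 k
  have hp2 : 2 ≤ p := hp.two_le
  have hq2 : 2 ≤ q := hq.two_le
  have hp3 : 3 ≤ p := by rcases hop with ⟨m, hm⟩; omega
  have hq3 : 3 ≤ q := by omega
  have hpne2 : p ≠ 2 := by omega
  have hqne2 : q ≠ 2 := by omega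
  have hpq' : p ≠ q := Nat.ne_of_lt hpq
  have hNpos : 0 < N := by positivity
  -- sigma' N = M * (p+1) * (q+1)
  have hcop1 : Nat.Coprime (2 ^ k) p :=
    (Nat.coprime_primes Nat.prime_two hp).mpr (Ne.symm hpne2) |>.pow_left k
  have hcop2 : Nat.Coprime (2 ^ k * p) q := by
    exact Nat.Coprime.mul
      ((Nat.coprime_primes Nat.prime_two hq).mpr (Ne.symm hqne2) |>.pow_left k)
      ((Nat.coprime_primes hp hq).mpr hpq')
  have hsig2 : sigma' (2 ^ k) = 2 ^ (k+1) - 1 := by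
    have := ArithmeticFunction.sigma_one_apply_prime_pow (p := 2) (i := k) Nat.prime_two
    rw [ArithmeticFunction.sigma_one_apply] at this
    rw [sigma', this, geom_two]
  have hsigp : sigma' p = p + 1 := by
    rw [sigma', hp.divisors, Finset.sum_pair hp.one_lt.ne]; omega
  have hsigq : sigma' q = q + 1 := by
    rw [sigma', hq.divisors, Finset.sum_pair hq.one_lt.ne]; omega
  have hsigN : sigma' N = M * (p + 1) * (q + 1) := by
    rw [hN, sigma', Nat.Coprime.sum_divisors_mul hcop2, Nat.Coprime.sum_divisors_mul hcop1]
    rw [← sigma', ← sigma', ← sigma', hsig2, hsigp, hsigq, hM]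
  -- key identity : sigma' N + p * q = 2 * N + M * (1 + p + q)
  have hkey : sigma' N + p * q = 2 * N + M * (1 + p + q) := by
    have hMeq : M + 1 = 2 ^ (k+1) := by
      have := Nat.one_le_two_pow (n := k+1); omega
    have : 2 * N = (M + 1) * (p * q) := by rw [hMeq, hN]; ring
    rw [this, hsigN]; ring
  set a : ℕ := sigma' N - 2 * N with ha
  have habN : 2 * N < sigma' N := hab
  have haeq : sigma' N = 2 * N + a := by omega
  have hMlt : M < 2 ^ (k + 1) := by have := Nat.one_le_two_pow (n := k+1); omega
  -- a = (M - r) + (M - s) * p + (M - t) * q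
  have hasum : a = (M - r) + (M - s) * p + (M - t) * q := by
    have e1 : M - r + r = M := by omega
    have e2 : M - s + s = M := by omega
    have e3 : M - t + t = M := by omega
    have h1 : a + p * q = M + M * p + M * q := by
      have hx : M * (1 + p + q) = M + M * p + M * q := by ring
      omega
    have e : ((M - r) + (M - s) * p + (M - t) * q) + (r + s * p + t * q)
        = M + M * p + M * q := by
      have expand : ((M - r) + (M - s) * p + (M - t) * q) + (r + s * p + t * q)
          = (M - r + r) + ((M - s) + s) * p + ((M - t) + t) * q := by ring
      rw [expand, e1, e2, e3]
    rw [← hrep] at e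
    exact Nat.add_right_cancel (h1.trans e.symm)
  -- binary reps
  obtain ⟨E1, hE1, hs1⟩ := bin_rep (k+1) (M - r) (by omega)
  obtain ⟨E2, hE2, hs2⟩ := bin_rep (k+1) (M - s) (by omega)
  obtain ⟨E3, hE3, hs3⟩ := bin_rep (k+1) (M - t) (by omega)
  set T1 : Finset ℕ := E1.image (fun j => 2 ^ j) with hT1
  set T2 : Finset ℕ := E2.image (fun j => 2 ^ j * p) with hT2
  set T3 : Finset ℕ := E3.image (fun j => 2 ^ j * q) with hT3
  -- element shapes
  have mem1 : ∀ x ∈ T1, ∃ j ≤ k, x = 2 ^ j := by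
    intro x hx
    obtain ⟨j, hj, rfl⟩ := Finset.mem_image.mp hx
    exact ⟨j, by have := hE1 hj; simp at this; omega, rfl⟩
  have mem2 : ∀ x ∈ T2, ∃ j ≤ k, x = 2 ^ j * p := by
    intro x hx
    obtain ⟨j, hj, rfl⟩ := Finset.mem_image.mp hx
    exact ⟨j, by have := hE2 hj; simp at this; omega, rfl⟩
  have mem3 : ∀ x ∈ T3, ∃ j ≤ k, x = 2 ^ j * q := by
    intro x hx
    obtain ⟨j, hj, rfl⟩ := Finset.mem_image.mp hx
    exact ⟨j, by have := hE3 hj; simp at this; omega, rfl⟩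
  -- disjointness
  have hpd2 : ∀ i : ℕ, ¬ p ∣ 2 ^ i := by
    intro i hdvd
    have h := (Nat.Prime.dvd_of_dvd_pow hp hdvd)
    have := Nat.le_of_dvd (by norm_num) h
    omega
  have hqd2 : ∀ i : ℕ, ¬ q ∣ 2 ^ i := by
    intro i hdvd
    have h := (Nat.Prime.dvd_of_dvd_pow hq hdvd)
    have := Nat.le_of_dvd (by norm_num) h
    omega
  have d12 : Disjoint T1 T2 := by
    rw [Finset.disjoint_left]
    intro x hx1 hx2
    obtain ⟨j2, _, he⟩ := mem2 x hx2
    obtain ⟨i, _, he1⟩ := mem1 x hx1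
    exact hpd2 i ⟨2 ^ j2, by rw [← he1, he]; ring⟩
  have d13 : Disjoint T1 T3 := by
    rw [Finset.disjoint_left]
    intro x hx1 hx3
    obtain ⟨j3, _, he⟩ := mem3 x hx3
    obtain ⟨i, _, he1⟩ := mem1 x hx1
    exact hqd2 i ⟨2 ^ j3, by rw [← he1, he]; ring⟩
  have d23 : Disjoint T2 T3 := by
    rw [Finset.disjoint_left]
    intro x hx2 hx3
    obtain ⟨i, _, he2⟩ := mem2 x hx2
    obtain ⟨j, _, he3⟩ := mem3 x hx3
    have hqd : q ∣ 2 ^ i * p := ⟨2 ^ j, by rw [← he2, he3]; ring⟩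
    rcases (Nat.Prime.dvd_mul hq).mp hqd with h | h
    · exact hqd2 i h
    · exact hpq' ((Nat.prime_dvd_prime_iff_eq hq hp).mp h).symm
  set T : Finset ℕ := (T1 ∪ T2) ∪ T3 with hT
  -- sum of T
  have hsumT : ∑ x ∈ T, x = a := by
    rw [hT, Finset.sum_union (by
        rw [Finset.disjoint_union_left]; exact ⟨d13, d23⟩),
      Finset.sum_union d12]
    have s1 : ∑ x ∈ T1, x = M - r := by
      rw [hT1, Finset.sum_image (fun x _ y _ h => Nat.pow_right_injective (le_refl 2) h), hs1]
    have s2 : ∑ x ∈ T2, x = (M - s) * p := by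
      rw [hT2, Finset.sum_image (fun x _ y _ h => by
        have := Nat.eq_of_mul_eq_mul_right (by omega : 0 < p) h
        exact Nat.pow_right_injective (le_refl 2) this)]
      rw [← Finset.sum_mul, hs2]
    have s3 : ∑ x ∈ T3, x = (M - t) * q := by
      rw [hT3, Finset.sum_image (fun x _ y _ h => by
        have := Nat.eq_of_mul_eq_mul_right (by omega : 0 < q) h
        exact Nat.pow_right_injective (le_refl 2) this)]
      rw [← Finset.sum_mul, hs3]
    rw [s1, s2, s3, hasum]
  -- T ⊆ properDivisors N
  have hTsub : T ⊆ N.properDivisors := by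
    intro x hx
    rw [Nat.mem_properDivisors]
    rw [hT] at hx
    rcases Finset.mem_union.mp hx with hx' | hx3
    · rcases Finset.mem_union.mp hx' with hx1 | hx2
      · obtain ⟨j, hj, rfl⟩ := mem1 x hx1
        constructor
        · exact Dvd.dvd.mul_right (Dvd.dvd.mul_right (pow_dvd_pow 2 hj) p) q
        · calc 2 ^ j ≤ 2 ^ k := Nat.pow_le_pow_right (by norm_num) hj
            _ < N := by
              rw [hN]
              calc 2 ^ k < 2 ^ k * p :=
                    (Nat.lt_mul_iff_one_lt_right (Nat.pow_pos (by norm_num : 0 < 2))).mpr (by omega)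
                _ ≤ 2 ^ k * p * q := Nat.le_mul_of_pos_right _ (by omega)
      · obtain ⟨j, hj, rfl⟩ := mem2 x hx2
        constructor
        · exact Dvd.dvd.mul_right (Nat.mul_dvd_mul (pow_dvd_pow 2 hj) dvd_rfl) q
        · calc 2 ^ j * p ≤ 2 ^ k * p :=
              Nat.mul_le_mul_right p (Nat.pow_le_pow_right (by norm_num) hj)
            _ < N := by
              rw [hN]
              exact (Nat.lt_mul_iff_one_lt_right (by positivity)).mpr (by omega)
    · obtain ⟨j, hj, rfl⟩ := mem3 x hx3
      constructor
      · have : 2 ^ j * q ∣ 2 ^ k * q := Nat.mul_dvd_mul (pow_dvd_pow 2 hj) dvd_rfl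
        exact this.trans ⟨p, by ring⟩
      · calc 2 ^ j * q ≤ 2 ^ k * q :=
            Nat.mul_le_mul_right q (Nat.pow_le_pow_right (by norm_num) hj)
          _ < N := by
            rw [hN]
            have h0 : 2 ^ k * q < 2 ^ k * q * p :=
              (Nat.lt_mul_iff_one_lt_right (by positivity)).mpr (by omega)
            calc 2 ^ k * q < 2 ^ k * q * p := h0
              _ = 2 ^ k * p * q := by ring
  -- build pseudoperfect set
  have hsum_proper : ∑ x ∈ N.properDivisors, x + N = sigma' N := by
    rw [sigma', ← Nat.sum_divisors_eq_sum_properDivisors_add_self]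
  have hsdiff : ∑ x ∈ N.properDivisors \ T, x + ∑ x ∈ T, x = ∑ x ∈ N.properDivisors, x :=
    Finset.sum_sdiff hTsub
  have hfinal : ∑ x ∈ N.properDivisors \ T, x = N := by omega
  exact hw.2 ⟨N.properDivisors \ T, Finset.sdiff_subset, hfinal⟩
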